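/- Let P be a small additive category, I ⊆ P a full additive subcategory, and d ≥ 1. Let K be the homotopy category of bounded cochain complexes over P, a triangulated category with shift Σ, and identify P and I with the complexes concentrated in degree 0. Set A^{(d+1)} := (P ∗ ΣP ∗ ⋯ ∗ Σ^{d+1}P) ∩ { X : Hom_K(X, Σ^m I) = 0 for all I ∈ I, m ≥ 1 }. Then an object X of K lies in A^{(d+1)} if and only if X is isomorphic in K to a complex ⋯ → 0 → P_{d+1} → P_d → ⋯ → P_1 → P_0 → 0 → ⋯ with each P_i ∈ P placed in cohomological degree −i, such that for every I ∈ I the induced sequence of abelian groups Hom_P(P_0, I) → Hom_P(P_1, I) → ⋯ → Hom_P(P_d, I) → Hom_P(P_{d+1}, I) → 0 is exact. -/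

import Mathlib

/-!
Statement 7: Let `P` be a small additive category, `I ⊆ P` a full additive subcategory,
`d ≥ 1`, and `K` the (bounded) homotopy category of complexes over `P`, with `P` and `I`
identified with complexes concentrated in degree `0`. Then
`X ∈ A^{(d+1)} = (P ∗ ΣP ∗ ⋯ ∗ Σ^{d+1}P) ∩ ker Ext^{≥1}(-, I)` if and only if `X` is
isomorphic in `K` to a complex `0 → P_{d+1} → ⋯ → P_1 → P_0 → 0` (`P_i` in degree `-i`)
such that `Hom(P_0, I) → ⋯ → Hom(P_{d+1}, I) → 0` is exact for every `I ∈ I`.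
-/

open CategoryTheory Limits Pretriangulated

universe v u

namespace AuslanderIyamaStmt7

section Generic

variable {C : Type u} [Category.{v} C] [HasZeroObject C] [HasShift C ℤ] [Preadditive C]
  [∀ n : ℤ, (shiftFunctor C n).Additive] [Pretriangulated C]

/-- `S₁ ∗ S₂`: objects `Y` fitting in a distinguished triangle `X ⟶ Y ⟶ Z ⟶ X⟦1⟧`
with `X ∈ S₁` and `Z ∈ S₂`. -/
def star (S₁ S₂ : Set C) : Set C :=
  {Y | ∃ (X Z : C) (f : X ⟶ Y) (g : Y ⟶ Z) (h : Z ⟶ X⟦(1 : ℤ)⟧),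
    (Triangle.mk f g h ∈ distTriang C) ∧ X ∈ S₁ ∧ Z ∈ S₂}

/-- `Σⁿ S`, closed under isomorphism. -/
def shiftSet (n : ℤ) (S : Set C) : Set C :=
  {X | ∃ Y ∈ S, Nonempty (X ≅ Y⟦n⟧)}

/-- `V n = P ∗ ΣP ∗ ⋯ ∗ Σⁿ P`. -/
def V (P : Set C) : ℕ → Set C
  | 0 => P
  | n + 1 => star (V P n) (shiftSet ((n : ℤ) + 1) P)

/-- The kernel class `{X : Hom(X, Σ^m I') = 0 for all I' ∈ I, m ≥ 1}`. -/
def extKer (I : Set C) : Set C :=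
  {X | ∀ I' ∈ I, ∀ m : ℤ, 1 ≤ m → ∀ f : X ⟶ I'⟦m⟧, f = 0}

end Generic

variable (P : Type u) [SmallCategory P] [Preadditive P] [HasZeroObject P]
  [HasBinaryBiproducts P]

/-- The identification of `P` with the complexes concentrated in degree `0`, regarded
in the homotopy category. -/
noncomputable def emb : P ⥤ HomotopyCategory P (ComplexShape.up ℤ) :=
  HomologicalComplex.single P (ComplexShape.up ℤ) 0 ⋙
    HomotopyCategory.quotient P (ComplexShape.up ℤ)

/-- The class of objects of the homotopy category isomorphic to an object of `P`
placed in degree `0`. -/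
noncomputable def Pclass : Set (HomotopyCategory P (ComplexShape.up ℤ)) :=
  {X | ∃ p : P, Nonempty (X ≅ (emb P).obj p)}

/-- The class of objects of the homotopy category isomorphic to an object of `I`
placed in degree `0`. -/
noncomputable def Iclass (I : Set P) : Set (HomotopyCategory P (ComplexShape.up ℤ)) :=
  {X | ∃ p ∈ I, Nonempty (X ≅ (emb P).obj p)}

/-- For a cochain complex `Y` over `P` (thought of as `0 → P_{d+1} → ⋯ → P_0 → 0` with
`P_i = Y.X (-i)`), exactness of the induced sequence
`Hom(P_0, I) → Hom(P_1, I) → ⋯ → Hom(P_d, I) → Hom(P_{d+1}, I) → 0`. -/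
def homSeqRightExact (d : ℕ) (Y : CochainComplex P ℤ) (I : P) : Prop :=
  (∀ k : ℕ, 1 ≤ k → k ≤ d → ∀ g : Y.X (-(k : ℤ)) ⟶ I,
      Y.d (-(k : ℤ) - 1) (-(k : ℤ)) ≫ g = 0 →
        ∃ h : Y.X (-(k : ℤ) + 1) ⟶ I, Y.d (-(k : ℤ)) (-(k : ℤ) + 1) ≫ h = g) ∧
    ∀ g : Y.X (-(d : ℤ) - 1) ⟶ I,
      ∃ h : Y.X (-(d : ℤ)) ⟶ I, Y.d (-(d : ℤ) - 1) (-(d : ℤ)) ≫ h = g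

set_option linter.unusedSectionVars false

section IsoClosure

variable {C : Type u} [Category.{v} C] [HasZeroObject C] [HasShift C ℤ] [Preadditive C]
  [∀ n : ℤ, (shiftFunctor C n).Additive] [Pretriangulated C]

lemma star_iso_closed {S₁ S₂ : Set C} {Y Y' : C} (e : Y ≅ Y') (h : Y ∈ star S₁ S₂) :
    Y' ∈ star S₁ S₂ := by
  obtain ⟨A, Z, f, g, h3, hT, hA, hZ⟩ := h
  refine ⟨A, Z, f ≫ e.hom, e.inv ≫ g, h3, ?_, hA, hZ⟩
  refine isomorphic_distinguished _ hT _ ?_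
  refine Triangle.isoMk _ _ (Iso.refl _) e.symm (Iso.refl _) ?_ ?_ ?_
  · change (f ≫ e.hom) ≫ e.inv = 𝟙 A ≫ f
    rw [Category.assoc, e.hom_inv_id, Category.comp_id, Category.id_comp]
  · change (e.inv ≫ g) ≫ 𝟙 Z = e.inv ≫ g
    rw [Category.comp_id]
  · change h3 ≫ (shiftFunctor C 1).map (𝟙 A) = 𝟙 Z ≫ h3
    rw [CategoryTheory.Functor.map_id, Category.comp_id, Category.id_comp]

lemma V_iso_closed {S : Set C} (n : ℕ) {X Y : C} (e : X ≅ Y)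
    (hS : ∀ ⦃A B : C⦄, (A ≅ B) → A ∈ S → B ∈ S) (hX : X ∈ V S n) : Y ∈ V S n := by
  cases n with
  | zero => exact hS e hX
  | succ n => exact star_iso_closed e hX

lemma extKer_iso_closed {I : Set C} {X Y : C} (e : X ≅ Y) (h : X ∈ extKer I) : Y ∈ extKer I := by
  intro I' hI' m hm f
  have h0 := h I' hI' m hm (e.hom ≫ f)
  calc f = e.inv ≫ (e.hom ≫ f) := by simp
  _ = 0 := by rw [h0, comp_zero]

lemma isZero_biprod {D : Type*} [Category D] [Preadditive D] {A B : D}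
    [HasBinaryBiproduct A B] (hA : IsZero A) (hB : IsZero B) : IsZero (A ⊞ B) := by
  rw [IsZero.iff_id_eq_zero]
  apply biprod.hom_ext
  · exact hA.eq_of_tgt _ _
  · exact hB.eq_of_tgt _ _

end IsoClosure

section Aux

open HomologicalComplex ZeroObject

noncomputable abbrev Qu : CochainComplex P ℤ ⥤ HomotopyCategory P (ComplexShape.up ℤ) :=
  HomotopyCategory.quotient P (ComplexShape.up ℤ)

lemma Pclass_iso_closed : ∀ ⦃A B : HomotopyCategory P (ComplexShape.up ℤ)⦄,
    (A ≅ B) → A ∈ Pclass P → B ∈ Pclass P := by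
  rintro A B e ⟨p, ⟨ep⟩⟩
  exact ⟨p, ⟨e.symm ≪≫ ep⟩⟩

/-- stupid truncation keeping degrees `≥ a` -/
noncomputable def trunc (Y : CochainComplex P ℤ) (a : ℤ) : CochainComplex P ℤ where
  X i := if a ≤ i then Y.X i else 0
  d i j :=
    if hi : a ≤ i then
      if hj : a ≤ j then eqToHom (if_pos hi) ≫ Y.d i j ≫ eqToHom (if_pos hj).symm
      else 0
    else 0
  shape i j hij := by
    by_cases hi : a ≤ i <;> by_cases hj : a ≤ j <;>
      simp [hi, hj, Y.shape i j hij]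
  d_comp_d' i j k _ _ := by
    by_cases hi : a ≤ i <;> by_cases hj : a ≤ j <;> by_cases hk : a ≤ k <;>
      simp [hi, hj, hk]

lemma isZero_trunc_X (Y : CochainComplex P ℤ) (a i : ℤ) (hi : ¬ a ≤ i) :
    IsZero ((trunc P Y a).X i) := by
  dsimp [trunc]
  rw [if_neg hi]
  exact isZero_zero P

lemma isZero_trunc_X' (Y : CochainComplex P ℤ) (a i : ℤ) (hi : IsZero (Y.X i)) :
    IsZero ((trunc P Y a).X i) := by
  dsimp [trunc]
  split_ifs
  · exact hi
  · exact isZero_zero P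

/-- the inclusion of the stupid truncation -/
noncomputable def truncι (Y : CochainComplex P ℤ) (a : ℤ) : trunc P Y a ⟶ Y where
  f i := if hi : a ≤ i then eqToHom (if_pos hi) else 0
  comm' i j hij := by
    by_cases hi : a ≤ i
    · have hj : a ≤ j := by change i + 1 = j at hij; omega
      simp [trunc, hi, hj]
    · exact (isZero_trunc_X P Y a i hi).eq_of_src _ _

lemma truncι_f_of_le (Y : CochainComplex P ℤ) (a i : ℤ) (hi : a ≤ i) :
    (truncι P Y a).f i = eqToHom (if_pos hi) :=
  dif_pos hi

end Aux

section Aux2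

open HomologicalComplex ZeroObject

/-- A complex concentrated in degree `a` is isomorphic to a single complex. -/
noncomputable def isoSingleOfConc (Y : CochainComplex P ℤ) (a : ℤ)
    (h : ∀ i, i ≠ a → IsZero (Y.X i)) :
    Y ≅ (HomologicalComplex.single P (ComplexShape.up ℤ) a).obj (Y.X a) :=
  HomologicalComplex.Hom.isoOfComponents
    (fun i => if hi : i = a then
        Y.XIsoOfEq hi ≪≫ (singleObjXIsoOfEq (ComplexShape.up ℤ) a (Y.X a) i hi).symm
      else (h i hi).iso (isZero_single_obj_X (ComplexShape.up ℤ) a (Y.X a) i hi))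
    (fun i j hij => by
      by_cases hj : j = a
      · subst hj
        have hi : i ≠ j := by change i + 1 = j at hij; omega
        have h0 : Y.d i j = 0 := (h i hi).eq_of_src _ _
        rw [h0, zero_comp, single_obj_d, comp_zero]
      · exact (isZero_single_obj_X (ComplexShape.up ℤ) a (Y.X a) j hj).eq_of_tgt _ _)

/-- The single at degree `b` is the `m`-fold shift of the single at `0`, in the
homotopy category, when `m + b = 0`. -/
noncomputable def QSingleShiftIso (p : P) (m b : ℤ) (h : m + b = 0) :
    ((((emb P).obj p)⟦m⟧ : HomotopyCategory P (ComplexShape.up ℤ))) ≅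
      (Qu P).obj ((HomologicalComplex.single P (ComplexShape.up ℤ) b).obj p) :=
  ((HomotopyCategory.singleFunctors P).shiftIso m b 0 (by omega)).app p


open HomologicalComplex in
lemma quotient_mem_V (n : ℕ) (Y : CochainComplex P ℤ)
    (hY : ∀ i, i < -(n : ℤ) ∨ 0 < i → IsZero (Y.X i)) :
    (Qu P).obj Y ∈ V (Pclass P) n := by
  induction n generalizing Y with
  | zero =>
    exact ⟨Y.X 0, ⟨(Qu P).mapIso (isoSingleOfConc P Y 0 (fun i hi => hY i (by omega)))⟩⟩
  | succ n ih =>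
    have ha : -((n + 1 : ℕ) : ℤ) = -(n : ℤ) - 1 := by push_cast; ring
    have hd0 : ∀ i, (ComplexShape.up ℤ).Rel i (-(n : ℤ) - 1) →
        Y.d i (-(n : ℤ) - 1) ≫ 𝟙 (Y.X (-(n : ℤ) - 1)) = 0 := by
      intro i hi
      have hz : IsZero (Y.X i) := hY i (Or.inl (by change i + 1 = -(n : ℤ) - 1 at hi; omega))
      rw [hz.eq_of_src (Y.d i (-(n : ℤ) - 1)) 0, zero_comp]
    have hzero : truncι P Y (-(n : ℤ)) ≫
        HomologicalComplex.mkHomToSingle (𝟙 (Y.X (-(n : ℤ) - 1))) hd0 = 0 := by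
      refine HomologicalComplex.hom_ext _ _ (fun i => ?_)
      by_cases hi : -(n : ℤ) ≤ i
      · exact (isZero_single_obj_X (ComplexShape.up ℤ) (-(n : ℤ) - 1) _ i
          (by omega)).eq_of_tgt _ _
      · exact (isZero_trunc_X P Y (-(n : ℤ)) i hi).eq_of_src _ _
    let S : ShortComplex (CochainComplex P ℤ) := ShortComplex.mk _ _ hzero
    let σ : ∀ m : ℤ, ((S.map (HomologicalComplex.eval P (ComplexShape.up ℤ) m)).Splitting) :=
      fun m =>
      if hm : -(n : ℤ) ≤ m then
        { r := eqToHom (if_pos hm).symm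
          s := 0
          f_r := by
            change (truncι P Y (-(n : ℤ))).f m ≫ eqToHom _ = 𝟙 _
            rw [truncι_f_of_le P Y _ m hm]
            exact (eqToHom_trans _ _).trans (eqToHom_refl _ _)
          s_g := by
            exact (isZero_single_obj_X (ComplexShape.up ℤ) (-(n : ℤ) - 1) _ m
              (by omega)).eq_of_tgt _ _
          id := by
            rw [comp_zero, add_zero]
            change eqToHom _ ≫ (truncι P Y (-(n : ℤ))).f m = 𝟙 (Y.X m)
            rw [truncι_f_of_le P Y _ m hm]
            exact (eqToHom_trans _ _).trans (eqToHom_refl _ _)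
             }
      else if hm' : m = -(n : ℤ) - 1 then
        { r := 0
          s := (singleObjXIsoOfEq (ComplexShape.up ℤ) (-(n : ℤ) - 1)
              (Y.X (-(n : ℤ) - 1)) m hm').hom ≫ eqToHom (congrArg Y.X hm'.symm)
          f_r := (isZero_trunc_X P Y (-(n : ℤ)) m hm).eq_of_src _ _
          s_g := by
            subst hm'
            change ((singleObjXIsoOfEq (ComplexShape.up ℤ) (-(n : ℤ) - 1) (Y.X (-(n : ℤ) - 1)) _ rfl).hom ≫
              eqToHom rfl) ≫ (HomologicalComplex.mkHomToSingle (𝟙 (Y.X (-(n : ℤ) - 1))) hd0).f (-(n : ℤ) - 1) = 𝟙 _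
            rw [HomologicalComplex.mkHomToSingle_f, eqToHom_refl, Category.comp_id,
              Category.id_comp]
            exact Iso.hom_inv_id _
          id := by
            subst hm'
            rw [zero_comp, zero_add]
            change (HomologicalComplex.mkHomToSingle (𝟙 (Y.X (-(n : ℤ) - 1))) hd0).f (-(n : ℤ) - 1) ≫
              ((singleObjXIsoOfEq (ComplexShape.up ℤ) (-(n : ℤ) - 1) (Y.X (-(n : ℤ) - 1)) _ rfl).hom ≫
              eqToHom rfl) = 𝟙 (Y.X (-(n : ℤ) - 1))
            rw [HomologicalComplex.mkHomToSingle_f, eqToHom_refl,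
              Category.comp_id, Category.id_comp]
            exact Iso.inv_hom_id _
             }
      else
        { r := 0
          s := 0
          f_r := (isZero_trunc_X P Y (-(n : ℤ)) m hm).eq_of_src _ _
          s_g := (isZero_single_obj_X (ComplexShape.up ℤ) (-(n : ℤ) - 1) _ m
              hm').eq_of_tgt _ _
          id := (hY m (Or.inl (by omega))).eq_of_src _ _ }
    have hdist : CochainComplex.trianglehOfDegreewiseSplit S σ ∈
        distTriang (HomotopyCategory P (ComplexShape.up ℤ)) :=
      (HomotopyCategory.distinguished_iff_iso_trianglehOfDegreewiseSplit _).2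
        ⟨S, σ, ⟨Iso.refl _⟩⟩
    refine ⟨(Qu P).obj (trunc P Y (-(n : ℤ))),
      (Qu P).obj ((HomologicalComplex.single P (ComplexShape.up ℤ) (-(n : ℤ) - 1)).obj
        (Y.X (-(n : ℤ) - 1))),
      (CochainComplex.trianglehOfDegreewiseSplit S σ).mor₁,
      (CochainComplex.trianglehOfDegreewiseSplit S σ).mor₂,
      (CochainComplex.trianglehOfDegreewiseSplit S σ).mor₃, hdist, ?_, ?_⟩
    · refine ih (trunc P Y (-(n : ℤ))) (fun i hi => ?_)
      rcases hi with hi | hi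
      · exact isZero_trunc_X P Y _ i (by omega)
      · exact isZero_trunc_X' P Y _ i (hY i (Or.inr hi))
    · exact ⟨(emb P).obj (Y.X (-(n : ℤ) - 1)), ⟨_, ⟨Iso.refl _⟩⟩,
        ⟨(QSingleShiftIso P (Y.X (-(n : ℤ) - 1)) ((n : ℤ) + 1) (-(n : ℤ) - 1)
          (by omega)).symm⟩⟩

open HomologicalComplex in
lemma mem_V_exists (n : ℕ) (X : HomotopyCategory P (ComplexShape.up ℤ))
    (hX : X ∈ V (Pclass P) n) :
    ∃ Y : CochainComplex P ℤ, (∀ i, i < -(n : ℤ) ∨ 0 < i → IsZero (Y.X i)) ∧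
      Nonempty (X ≅ (Qu P).obj Y) := by
  induction n generalizing X with
  | zero =>
    obtain ⟨p, ⟨e⟩⟩ := hX
    refine ⟨(HomologicalComplex.single P (ComplexShape.up ℤ) 0).obj p, fun i hi =>
      isZero_single_obj_X (ComplexShape.up ℤ) 0 p i (by omega), ⟨e⟩⟩
  | succ n ih =>
    obtain ⟨A, Z, f, g, h3, hT, hA, hZ⟩ := hX
    obtain ⟨YA, hYA, ⟨eA⟩⟩ := ih A hA
    obtain ⟨W, ⟨p, ⟨eW⟩⟩, ⟨eZ⟩⟩ := hZ
    have eZ' : Z ≅ ((emb P).obj p)⟦(n : ℤ) + 1⟧ :=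
      eZ ≪≫ (shiftFunctor (HomotopyCategory P (ComplexShape.up ℤ)) ((n : ℤ) + 1)).mapIso eW
    have hT' : (Triangle.mk f g h3).invRotate ∈
        distTriang (HomotopyCategory P (ComplexShape.up ℤ)) :=
      inv_rot_of_distTriang _ hT
    -- identification of the first object of the inverse rotation
    have e1 : ((emb P).obj p)⟦(n : ℤ) + 1⟧ ≅
        (Qu P).obj ((HomologicalComplex.single P (ComplexShape.up ℤ) (-(n : ℤ) - 1)).obj p) :=
      QSingleShiftIso P p ((n : ℤ) + 1) (-(n : ℤ) - 1) (by omega)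
    have e2 : ((((HomotopyCategory.singleFunctors P).functor (-(n : ℤ) - 1)).obj p)⟦(-1 : ℤ)⟧ :
        HomotopyCategory P (ComplexShape.up ℤ)) ≅
          ((HomotopyCategory.singleFunctors P).functor (-(n : ℤ))).obj p :=
      ((HomotopyCategory.singleFunctors P).shiftIso (-1) (-(n : ℤ)) (-(n : ℤ) - 1)
        (by omega)).app p
    have iso1 : (Qu P).obj ((HomologicalComplex.single P (ComplexShape.up ℤ)
        (-(n : ℤ))).obj p) ≅ (Triangle.mk f g h3).invRotate.obj₁ :=
      ((shiftFunctor (HomotopyCategory P (ComplexShape.up ℤ)) (-1 : ℤ)).mapIso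
        (eZ' ≪≫ e1) ≪≫ e2).symm
    let u : (Qu P).obj ((HomologicalComplex.single P (ComplexShape.up ℤ)
        (-(n : ℤ))).obj p) ⟶ (Qu P).obj YA :=
      iso1.hom ≫ (Triangle.mk f g h3).invRotate.mor₁ ≫ eA.hom
    let w := (Qu P).preimage u
    have hw : (Qu P).map w = u := (Qu P).map_preimage u
    have hT₂ : CochainComplex.mappingCone.triangleh w ∈
        distTriang (HomotopyCategory P (ComplexShape.up ℤ)) :=
      HomotopyCategory.mappingCone_triangleh_distinguished w
    have comm : (CochainComplex.mappingCone.triangleh w).mor₁ ≫ eA.symm.hom =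
        iso1.hom ≫ (Triangle.mk f g h3).invRotate.mor₁ := by
      change (Qu P).map w ≫ eA.symm.hom = _
      rw [hw]
      dsimp only [u]
      exact (Category.assoc _ _ _).trans (congrArg (fun t => iso1.hom ≫ t)
        ((Category.assoc _ _ _).trans ((congrArg (fun t => (Triangle.mk f g h3).invRotate.mor₁ ≫ t)
          eA.hom_inv_id).trans (Category.comp_id _))))
    have etri := isoTriangleOfIso₁₂ _ _ hT₂ hT' iso1 eA.symm comm
    have e3 : (Qu P).obj (CochainComplex.mappingCone w) ≅ X :=
      (Triangle.π₃ : Triangle (HomotopyCategory P (ComplexShape.up ℤ)) ⥤ _).mapIso etri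
    refine ⟨CochainComplex.mappingCone w, fun i hi => ?_, ⟨e3.symm⟩⟩
    · refine IsZero.of_iso (isZero_biprod ?_ ?_)
        (HomologicalComplex.homotopyCofiber.XIsoBiprod w i (i + 1) rfl)
      · exact isZero_single_obj_X (ComplexShape.up ℤ) (-(n : ℤ)) p (i + 1) (by omega)
      · refine hYA i (by omega)

def LC (Y : CochainComplex P ℤ) (ip : P) (a b c' : ℤ) : Prop :=
  ∀ g : Y.X b ⟶ ip, Y.d a b ≫ g = 0 → ∃ h : Y.X c' ⟶ ip, Y.d b c' ≫ h = g

lemma LC_congr {Y : CochainComplex P ℤ} {ip : P} {a b c' a₂ b₂ c₂ : ℤ}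
    (ha : a = a₂) (hb : b = b₂) (hc : c' = c₂)
    (h : LC P Y ip a b c') : LC P Y ip a₂ b₂ c₂ := by
  subst ha hb hc; exact h

open HomologicalComplex in
lemma homotopy_to_single_iff (Y : CochainComplex P ℤ) (ip : P) (a b c' : ℤ)
    (hab : a + 1 = b) (hbc : b + 1 = c') :
    (∀ g : Y ⟶ (HomologicalComplex.single P (ComplexShape.up ℤ) b).obj ip,
      Nonempty (Homotopy g 0)) ↔ LC P Y ip a b c' := by
  subst hab hbc
  constructor
  · intro H g hg
    have hφ : ∀ i, (ComplexShape.up ℤ).Rel i (a + 1) → Y.d i (a + 1) ≫ g = 0 := by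
      intro i hi
      obtain rfl : i = a := by change i + 1 = a + 1 at hi; omega
      exact hg
    obtain ⟨ht⟩ := H (HomologicalComplex.mkHomToSingle g hφ)
    refine ⟨ht.hom (a + 1 + 1) (a + 1) ≫
      (singleObjXSelf (ComplexShape.up ℤ) (a + 1) ip).hom, ?_⟩
    have hcomm := ht.comm (a + 1)
    rw [dNext_eq ht.hom (show (ComplexShape.up ℤ).Rel (a + 1) (a + 1 + 1) from rfl),
      prevD_eq ht.hom (show (ComplexShape.up ℤ).Rel a (a + 1) from rfl),
      HomologicalComplex.mkHomToSingle_f, HomologicalComplex.single_obj_d, comp_zero,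
      add_zero, HomologicalComplex.zero_f, add_zero] at hcomm
    rw [← Category.assoc, ← hcomm, Category.assoc, Iso.inv_hom_id, Category.comp_id]
  · intro H g
    have hg : Y.d a (a + 1) ≫ (g.f (a + 1) ≫
        (singleObjXSelf (ComplexShape.up ℤ) (a + 1) ip).hom) = 0 := by
      have hc := g.comm' a (a + 1) rfl
      rw [HomologicalComplex.single_obj_d, comp_zero] at hc
      rw [← Category.assoc, ← hc, zero_comp]
    obtain ⟨h, hh⟩ := H _ hg
    refine ⟨{
      hom := fun i j => if hij : i = a + 1 + 1 ∧ j = a + 1 then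
        (Y.XIsoOfEq hij.1).hom ≫ h ≫
          (singleObjXIsoOfEq (ComplexShape.up ℤ) (a + 1) ip j hij.2).inv else 0
      zero := fun i j hij => by
        rw [dif_neg]
        rintro ⟨rfl, rfl⟩
        exact hij rfl
      comm := fun i => by
        by_cases hi : i = a + 1
        · subst hi
          rw [dNext_eq _ (show (ComplexShape.up ℤ).Rel (a + 1) (a + 1 + 1) from rfl),
            prevD_eq _ (show (ComplexShape.up ℤ).Rel a (a + 1) from rfl),
            HomologicalComplex.single_obj_d, comp_zero, add_zero,
            HomologicalComplex.zero_f, add_zero]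
          rw [dif_pos ⟨rfl, rfl⟩]
          simp only [HomologicalComplex.XIsoOfEq_rfl, Iso.refl_hom, Category.id_comp]
          rw [← Category.assoc, hh, Category.assoc]
          simp [singleObjXSelf]
        · exact (isZero_single_obj_X (ComplexShape.up ℤ) (a + 1) ip i hi).eq_of_tgt _ _ }⟩

open HomologicalComplex in
lemma hom_Q_single_zero_iff (Y : CochainComplex P ℤ) (ip : P) (m b : ℤ) (hmb : m + b = 0) :
    (∀ f : (Qu P).obj Y ⟶ (((emb P).obj ip)⟦m⟧ :
        HomotopyCategory P (ComplexShape.up ℤ)), f = 0) ↔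
      (∀ g : Y ⟶ (HomologicalComplex.single P (ComplexShape.up ℤ) b).obj ip,
        Nonempty (Homotopy g 0)) := by
  have e := QSingleShiftIso P ip m b hmb
  constructor
  · intro H g
    have h0 : (Qu P).map g = 0 := by
      have h1 := H ((Qu P).map g ≫ e.inv)
      have h2 := congrArg (· ≫ e.hom) h1
      simpa using h2
    exact ⟨HomotopyCategory.homotopyOfEq _ _ (by rw [h0, Functor.map_zero])⟩
  · intro H f
    have h1 : f ≫ e.hom = (Qu P).map ((Qu P).preimage (f ≫ e.hom)) :=
      ((Qu P).map_preimage _).symm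
    obtain ⟨ht⟩ := H ((Qu P).preimage (f ≫ e.hom))
    have h2 : f ≫ e.hom = 0 := by
      rw [h1, HomotopyCategory.eq_of_homotopy _ _ ht, Functor.map_zero]
    calc f = (f ≫ e.hom) ≫ e.inv := by simp
    _ = 0 := by rw [h2, zero_comp]

open HomologicalComplex in
lemma extKer_iff (d : ℕ) (Y : CochainComplex P ℤ)
    (hY : ∀ i, i < -(d : ℤ) - 1 ∨ 0 < i → IsZero (Y.X i)) (I : Set P) :
    (Qu P).obj Y ∈ extKer (Iclass P I) ↔ ∀ ip ∈ I, homSeqRightExact P d Y ip := by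
  constructor
  · intro h ip hip
    have key : ∀ m a b c2 : ℤ, 1 ≤ m → m + b = 0 → a + 1 = b → b + 1 = c2 →
        LC P Y ip a b c2 := by
      intro m a b c2 hm hmb hab hbc
      have h1 : ∀ f : (Qu P).obj Y ⟶ (((emb P).obj ip)⟦m⟧ :
          HomotopyCategory P (ComplexShape.up ℤ)), f = 0 :=
        h ((emb P).obj ip) ⟨ip, hip, ⟨Iso.refl _⟩⟩ m hm
      exact (homotopy_to_single_iff P Y ip a b c2 hab hbc).1
        ((hom_Q_single_zero_iff P Y ip m b hmb).1 h1)
    constructor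
    · intro k hk1 hk2 g hg
      exact key (k : ℤ) (-(k : ℤ) - 1) (-(k : ℤ)) (-(k : ℤ) + 1)
        (by exact_mod_cast hk1) (by omega) (by omega) (by omega) g hg
    · intro g
      have hz : IsZero (Y.X (-(d : ℤ) - 2)) := hY _ (Or.inl (by omega))
      have h0 : Y.d (-(d : ℤ) - 2) (-(d : ℤ) - 1) ≫ g = 0 := by
        rw [hz.eq_of_src (Y.d _ _) 0, zero_comp]
      exact key ((d : ℤ) + 1) (-(d : ℤ) - 2) (-(d : ℤ) - 1) (-(d : ℤ))
        (by omega) (by omega) (by omega) (by omega) g h0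
  · intro hseq I' hI' m hm f
    obtain ⟨ip, hip, ⟨eI⟩⟩ := hI'
    have key : ∀ f' : (Qu P).obj Y ⟶ (((emb P).obj ip)⟦m⟧ :
        HomotopyCategory P (ComplexShape.up ℤ)), f' = 0 := by
      refine (hom_Q_single_zero_iff P Y ip m (-m) (by omega)).2 ?_
      refine (homotopy_to_single_iff P Y ip (-m - 1) (-m) (-m + 1)
        (by omega) (by omega)).2 ?_
      by_cases hmd : m ≤ (d : ℤ)
      · obtain ⟨k, rfl⟩ : ∃ k : ℕ, (k : ℤ) = m := ⟨m.toNat, Int.toNat_of_nonneg (by omega)⟩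
        exact (hseq ip hip).1 k (by exact_mod_cast hm) (by exact_mod_cast hmd)
      · by_cases hmd2 : m = (d : ℤ) + 1
        · subst hmd2
          have hLC : LC P Y ip (-(d : ℤ) - 2) (-(d : ℤ) - 1) (-(d : ℤ)) :=
            fun g _ => (hseq ip hip).2 g
          exact LC_congr P (by ring) (by ring) (by ring) hLC
        · intro g _
          have hz : IsZero (Y.X (-m)) := hY _ (Or.inl (by omega))
          exact ⟨0, by rw [comp_zero]; exact hz.eq_of_src 0 g⟩
    have h2 : f ≫ (shiftFunctor (HomotopyCategory P (ComplexShape.up ℤ)) m).map eI.hom = 0 :=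
      key _
    calc f = (f ≫ (shiftFunctor _ m).map eI.hom) ≫ (shiftFunctor _ m).map eI.inv := by
          simp [← Functor.map_comp]
    _ = 0 := by rw [h2, zero_comp]

end Aux2

theorem statement7 (d : ℕ) (hd : 1 ≤ d) (I : Set P)
    (hIiso : ∀ ⦃X Y : P⦄, (X ≅ Y) → X ∈ I → Y ∈ I)
    (hIsum : ∀ ⦃X Y : P⦄, X ∈ I → Y ∈ I → (X ⊞ Y) ∈ I)
    (hIzero : ∀ ⦃X : P⦄, IsZero X → X ∈ I)
    (X : HomotopyCategory P (ComplexShape.up ℤ)) :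
    X ∈ V (Pclass P) (d + 1) ∩ extKer (Iclass P I) ↔
      ∃ Y : CochainComplex P ℤ,
        (∀ i : ℤ, (i < -(d : ℤ) - 1 ∨ 0 < i) → IsZero (Y.X i)) ∧
        (∀ Iobj ∈ I, homSeqRightExact P d Y Iobj) ∧
        Nonempty (X ≅ (HomotopyCategory.quotient P (ComplexShape.up ℤ)).obj Y) := by
  constructor
  · rintro ⟨hV, hK⟩
    obtain ⟨Y, hY, ⟨e⟩⟩ := mem_V_exists P (d + 1) X hV
    have hY' : ∀ i : ℤ, (i < -(d : ℤ) - 1 ∨ 0 < i) → IsZero (Y.X i) := by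
      intro i hi
      refine hY i ?_
      rcases hi with hi | hi
      · exact Or.inl (by push_cast; omega)
      · exact Or.inr hi
    refine ⟨Y, hY', ?_, ⟨e⟩⟩
    exact (extKer_iff P d Y hY' I).1 (extKer_iso_closed e hK)
  · rintro ⟨Y, hY, hseq, ⟨e⟩⟩
    have hY2 : ∀ i : ℤ, i < -((d + 1 : ℕ) : ℤ) ∨ 0 < i → IsZero (Y.X i) := by
      intro i hi
      refine hY i ?_
      rcases hi with hi | hi
      · exact Or.inl (by push_cast at hi ⊢; omega)
      · exact Or.inr hi
    constructor
    · exact V_iso_closed (d + 1) e.symm (Pclass_iso_closed P)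
        (quotient_mem_V P (d + 1) Y hY2)
    · exact extKer_iso_closed e.symm ((extKer_iff P d Y hY I).2 hseq)


end AuslanderIyamaStmt7
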